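/- Let N ≥ 2 and let A = (a_{jk}) be a symmetric N×N real matrix with nonnegative off-diagonal entries and zero row sums. Let β > 0 and let g : ℝ → ℝ satisfy (g(u) − g(v))/(u − v) ≥ β for all u ≠ v. Then for every x ∈ ℝ^N, writing g(x) = (g(x_1),…,g(x_N))^T, one has x^T A g(x) ≤ β x^T A x (and in particular x^T A g(x) ≤ 0). -/

import Mathlib

open Matrix

/-- Let A be a symmetric N×N matrix with nonnegative off-diagonal entries
and zero row sums, β > 0, and g : ℝ → ℝ with (g(u) − g(v))/(u − v) ≥ β for all u ≠ v.
Then for every x ∈ ℝ^N, with g acting componentwise,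
xᵀ A g(x) ≤ β xᵀ A x, and in particular xᵀ A g(x) ≤ 0. -/
theorem stmt9 (N : ℕ) (hN : 2 ≤ N) (A : Matrix (Fin N) (Fin N) ℝ)
    (hsym : ∀ j k, A j k = A k j)
    (hoff : ∀ j k, j ≠ k → 0 ≤ A j k)
    (hdiag : ∀ j, A j j = -∑ k ∈ Finset.univ.erase j, A j k)
    (β : ℝ) (hβ : 0 < β) (g : ℝ → ℝ)
    (hg : ∀ u v : ℝ, u ≠ v → β ≤ (g u - g v) / (u - v)) :
    ∀ x : Fin N → ℝ,
      x ⬝ᵥ A.mulVec (fun i => g (x i)) ≤ β * (x ⬝ᵥ A.mulVec x) ∧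
      x ⬝ᵥ A.mulVec (fun i => g (x i)) ≤ 0 := by
  intro x
  have hrow : ∀ j, ∑ k, A j k = 0 := by
    intro j
    rw [← Finset.add_sum_erase _ _ (Finset.mem_univ j), hdiag j]
    ring
  have hcol : ∀ k, ∑ j, A j k = 0 := by
    intro k
    rw [show (∑ j, A j k) = ∑ j, A k j from Finset.sum_congr rfl fun j _ => hsym j k]
    exact hrow k
  -- key identity
  have key : ∀ y : Fin N → ℝ,
      x ⬝ᵥ A.mulVec y = -(1/2) * ∑ j, ∑ k, A j k * (x j - x k) * (y j - y k) := by
    intro y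
    have e1 : ∑ j, ∑ k, A j k * (x j - x k) * (y j - y k)
        = (∑ j, ∑ k, A j k * (x j * y j)) - (∑ j, ∑ k, A j k * (x j * y k))
          - (∑ j, ∑ k, A j k * (x k * y j)) + (∑ j, ∑ k, A j k * (x k * y k)) := by
      have flat : ∀ (f1 f2 f3 f4 : Fin N → Fin N → ℝ),
          (∑ j, ∑ k, (f1 j k - f2 j k - f3 j k + f4 j k))
            = (∑ j, ∑ k, f1 j k) - (∑ j, ∑ k, f2 j k)
              - (∑ j, ∑ k, f3 j k) + (∑ j, ∑ k, f4 j k) := by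
        intro f1 f2 f3 f4
        simp [Finset.sum_sub_distrib, Finset.sum_add_distrib]
      rw [← flat]
      apply Finset.sum_congr rfl; intro j _
      apply Finset.sum_congr rfl; intro k _
      ring
    have e2 : ∑ j, ∑ k, A j k * (x j * y j) = 0 := by
      apply Finset.sum_eq_zero; intro j _
      rw [← Finset.sum_mul, hrow j, zero_mul]
    have e3 : ∑ j, ∑ k, A j k * (x k * y k) = 0 := by
      rw [Finset.sum_comm]
      apply Finset.sum_eq_zero; intro k _
      rw [← Finset.sum_mul, hcol k, zero_mul]
    have e4 : ∑ j, ∑ k, A j k * (x k * y j) = ∑ j, ∑ k, A j k * (x j * y k) := by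
      rw [Finset.sum_comm]
      apply Finset.sum_congr rfl; intro k _
      apply Finset.sum_congr rfl; intro j _
      rw [hsym j k, mul_comm (x k) (y j)]
    have e5 : x ⬝ᵥ A.mulVec y = ∑ j, ∑ k, A j k * (x j * y k) := by
      simp only [dotProduct, mulVec, Finset.mul_sum]
      apply Finset.sum_congr rfl; intro j _
      apply Finset.sum_congr rfl; intro k _
      ring
    rw [e5, e1, e2, e3, e4]
    ring
  -- termwise bound
  have hterm : ∀ j k, β * (A j k * (x j - x k) * (x j - x k))
      ≤ A j k * (x j - x k) * (g (x j) - g (x k)) := by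
    intro j k
    rcases eq_or_ne j k with rfl | hjk
    · simp
    rcases eq_or_ne (x j) (x k) with hx | hx
    · simp [hx]
    have ha := hoff j k hjk
    have hd : x j - x k ≠ 0 := sub_ne_zero.mpr hx
    have h1 : β * ((x j - x k) * (x j - x k)) ≤ (x j - x k) * (g (x j) - g (x k)) := by
      have := hg (x j) (x k) hx
      have hsq : (0:ℝ) < (x j - x k) ^ 2 := by positivity
      have := mul_le_mul_of_nonneg_left this (le_of_lt hsq)
      calc β * ((x j - x k) * (x j - x k)) = (x j - x k)^2 * β := by ring
        _ ≤ (x j - x k)^2 * ((g (x j) - g (x k)) / (x j - x k)) := this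
        _ = (x j - x k) * (g (x j) - g (x k)) := by
            field_simp
    calc β * (A j k * (x j - x k) * (x j - x k))
        = A j k * (β * ((x j - x k) * (x j - x k))) := by ring
      _ ≤ A j k * ((x j - x k) * (g (x j) - g (x k))) :=
          mul_le_mul_of_nonneg_left h1 ha
      _ = A j k * (x j - x k) * (g (x j) - g (x k)) := by ring
  have hSle : β * ∑ j, ∑ k, A j k * (x j - x k) * (x j - x k)
      ≤ ∑ j, ∑ k, A j k * (x j - x k) * (g (x j) - g (x k)) := by
    rw [Finset.mul_sum]
    apply Finset.sum_le_sum; intro j _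
    rw [Finset.mul_sum]
    apply Finset.sum_le_sum; intro k _
    exact hterm j k
  have hSnn : 0 ≤ ∑ j, ∑ k, A j k * (x j - x k) * (x j - x k) := by
    apply Finset.sum_nonneg; intro j _
    apply Finset.sum_nonneg; intro k _
    rcases eq_or_ne j k with rfl | hjk
    · simp
    · have := hoff j k hjk
      have : 0 ≤ A j k * (x j - x k)^2 := by positivity
      calc (0:ℝ) ≤ A j k * (x j - x k)^2 := this
        _ = A j k * (x j - x k) * (x j - x k) := by ring
  have h1 : x ⬝ᵥ A.mulVec (fun i => g (x i)) ≤ β * (x ⬝ᵥ A.mulVec x) := by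
    rw [key, key]
    have : β * (-(1/2) * ∑ j, ∑ k, A j k * (x j - x k) * (x j - x k))
        = -(1/2) * (β * ∑ j, ∑ k, A j k * (x j - x k) * (x j - x k)) := by ring
    rw [this]
    nlinarith [hSle]
  have h2 : β * (x ⬝ᵥ A.mulVec x) ≤ 0 := by
    rw [key]
    nlinarith [hSnn]
  exact ⟨h1, h1.trans h2⟩
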